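/- If I : ℝ_{≥0}^M → ℝ_{>0}^M is a standard interference function (positive, monotone, scalable) and P ∈ ℝ_{>0}^M, then the constrained map Î(p) = min{P, I(p)} (componentwise) is also a standard interference function; consequently the iteration p^{t+1} = Î(p^t) converges to the unique fixed point of Î from any starting point in [0, P]. -/

import Mathlib

/-- Helper: an antitone sequence `μ ≥ 1` which contracts geometrically whenever its
infimum exceeds 1 must tend to 1. -/
private lemma aux_ratio_tendsto_one (μ : ℕ → ℝ) (h1 : ∀ n, 1 ≤ μ n)
    (hA : ∀ n, μ (n + 1) ≤ μ n)
    (key : (1 < ⨅ n, μ n) → ∃ r : ℝ, 0 ≤ r ∧ r < 1 ∧ ∀ n, μ (n + 1) ≤ r * μ n) :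
    Filter.Tendsto μ Filter.atTop (nhds 1) := by
  have hbdd : BddBelow (Set.range μ) := ⟨1, by rintro x ⟨n, rfl⟩; exact h1 n⟩
  have hant : Antitone μ := antitone_nat_of_succ_le hA
  have hL1 : 1 ≤ ⨅ n, μ n := le_ciInf h1
  rcases eq_or_lt_of_le hL1 with hL | hL
  · have := tendsto_atTop_ciInf hant hbdd
    rwa [← hL] at this
  · exfalso
    obtain ⟨r, hr0, hr1, hrec⟩ := key hL
    have hpow : ∀ n, μ n ≤ r ^ n * μ 0 := by
      intro n
      induction n with
      | zero => simp
      | succ n ih =>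
        calc μ (n + 1) ≤ r * μ n := hrec n
          _ ≤ r * (r ^ n * μ 0) := mul_le_mul_of_nonneg_left ih hr0
          _ = r ^ (n + 1) * μ 0 := by ring
    have hμ0 : 0 < μ 0 := lt_of_lt_of_le one_pos (h1 0)
    obtain ⟨n, hn⟩ := exists_pow_lt_of_lt_one (by positivity : (0:ℝ) < 1 / μ 0) hr1
    have h2 : r ^ n * μ 0 < 1 := by
      have := mul_lt_mul_of_pos_right hn hμ0
      rwa [one_div, inv_mul_cancel₀ hμ0.ne'] at this
    have := (h1 n).trans (hpow n)
    linarith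

/-- If `I` is a standard interference function (positive, monotone, scalable)
and `P > 0` componentwise, then the constrained map `Î(p) = min{P, I(p)}` is
also a standard interference function, and the iteration `p ← Î(p)` converges
to the unique fixed point of `Î` from any starting point in `[0, P]`. -/
theorem stmt_13 (M : ℕ) (I : (Fin M → ℝ) → (Fin M → ℝ)) (P : Fin M → ℝ)
    (hP : ∀ m, 0 < P m)
    (hpos : ∀ p : Fin M → ℝ, (∀ m, 0 ≤ p m) → ∀ m, 0 < I p m)
    (hmono : ∀ p p' : Fin M → ℝ, (∀ m, 0 ≤ p m) → (∀ m, p m ≤ p' m) →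
      ∀ m, I p m ≤ I p' m)
    (hscale : ∀ p : Fin M → ℝ, (∀ m, 0 ≤ p m) → ∀ μ : ℝ, 1 < μ →
      ∀ m, I (fun ℓ => μ * p ℓ) m < μ * I p m) :
    (∀ p : Fin M → ℝ, (∀ m, 0 ≤ p m) → ∀ m, 0 < min (P m) (I p m)) ∧
    (∀ p p' : Fin M → ℝ, (∀ m, 0 ≤ p m) → (∀ m, p m ≤ p' m) →
      ∀ m, min (P m) (I p m) ≤ min (P m) (I p' m)) ∧
    (∀ p : Fin M → ℝ, (∀ m, 0 ≤ p m) → ∀ μ : ℝ, 1 < μ →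
      ∀ m, min (P m) (I (fun ℓ => μ * p ℓ) m) < μ * min (P m) (I p m)) ∧
    (∃ pf : Fin M → ℝ, (∀ m, 0 ≤ pf m) ∧
      (fun m => min (P m) (I pf m)) = pf ∧
      (∀ p' : Fin M → ℝ, (∀ m, 0 ≤ p' m) →
        (fun m => min (P m) (I p' m)) = p' → p' = pf) ∧
      (∀ p₀ : Fin M → ℝ, (∀ m, 0 ≤ p₀ m ∧ p₀ m ≤ P m) →
        Filter.Tendsto
          (fun t : ℕ => (fun p : Fin M → ℝ => fun m => min (P m) (I p m))^[t] p₀)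
          Filter.atTop (nhds pf))) := by
  have Jpos : ∀ p : Fin M → ℝ, (∀ m, 0 ≤ p m) → ∀ m, 0 < min (P m) (I p m) :=
    fun p hp m => lt_min (hP m) (hpos p hp m)
  have Jmono : ∀ p p' : Fin M → ℝ, (∀ m, 0 ≤ p m) → (∀ m, p m ≤ p' m) →
      ∀ m, min (P m) (I p m) ≤ min (P m) (I p' m) :=
    fun p p' hp hpp m => min_le_min le_rfl (hmono p p' hp hpp m)
  have Jscale : ∀ p : Fin M → ℝ, (∀ m, 0 ≤ p m) → ∀ μ : ℝ, 1 < μ →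
      ∀ m, min (P m) (I (fun ℓ => μ * p ℓ) m) < μ * min (P m) (I p m) := by
    intro p hp μ hμ m
    rcases le_or_gt (P m) (I p m) with h | h
    · rw [min_eq_left h]
      calc min (P m) (I (fun ℓ => μ * p ℓ) m) ≤ P m := min_le_left _ _
        _ < μ * P m := by nlinarith [hP m]
    · rw [min_eq_right h.le]
      calc min (P m) (I (fun ℓ => μ * p ℓ) m) ≤ I (fun ℓ => μ * p ℓ) m := min_le_right _ _
        _ < μ * I p m := hscale p hp μ hμ m
  -- downward scalability of the constrained map
  have Jsdown : ∀ p : Fin M → ℝ, (∀ m, 0 ≤ p m) → ∀ lam : ℝ, 0 < lam → lam < 1 →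
      ∀ m, lam * min (P m) (I p m) < min (P m) (I (fun ℓ => lam * p ℓ) m) := by
    intro p hp lam h0 h1 m
    have h2 : (1:ℝ) < 1 / lam := by rw [lt_div_iff₀ h0]; linarith
    have hkey := Jscale (fun ℓ => lam * p ℓ) (fun ℓ => mul_nonneg h0.le (hp ℓ)) (1/lam) h2 m
    have heq : (fun ℓ => (1/lam) * (lam * p ℓ)) = p := funext fun ℓ => by
      field_simp
    rw [heq] at hkey
    have := mul_lt_mul_of_pos_left hkey h0
    rwa [← mul_assoc, mul_one_div_cancel h0.ne', one_mul] at this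
  refine ⟨Jpos, Jmono, Jscale, ?_⟩
  classical
  -- ===== existence of a fixed point (Knaster–Tarski, pointwise sup) =====
  set S : Set (Fin M → ℝ) :=
    {p | (∀ m, 0 ≤ p m ∧ p m ≤ P m) ∧ ∀ m, p m ≤ min (P m) (I p m)} with hS
  have h0S : (fun _ => (0:ℝ)) ∈ S := by
    refine ⟨fun m => ⟨le_refl _, (hP m).le⟩, fun m => ?_⟩
    exact (Jpos (fun _ => 0) (fun _ => le_refl _) m).le
  have hbddS : ∀ m, BddAbove ((fun p => p m) '' S) := by
    intro m; exact ⟨P m, by rintro x ⟨p, hp, rfl⟩; exact (hp.1 m).2⟩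
  have hneS : ∀ m, ((fun p => p m) '' S).Nonempty :=
    fun m => ⟨0, ⟨fun _ => 0, h0S, rfl⟩⟩
  set pf : Fin M → ℝ := fun m => sSup ((fun p => p m) '' S) with hpf
  have hle_pf : ∀ p ∈ S, ∀ m, p m ≤ pf m :=
    fun p hp m => le_csSup (hbddS m) ⟨p, hp, rfl⟩
  have pf_nonneg : ∀ m, 0 ≤ pf m := fun m => hle_pf _ h0S m
  have pf_le_P : ∀ m, pf m ≤ P m := by
    intro m
    exact csSup_le (hneS m) (by rintro x ⟨p, hp, rfl⟩; exact (hp.1 m).2)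
  have pf_le_J : ∀ m, pf m ≤ min (P m) (I pf m) := by
    intro m
    refine csSup_le (hneS m) ?_
    rintro x ⟨p, hp, rfl⟩
    exact (hp.2 m).trans (Jmono p pf (fun k => (hp.1 k).1) (hle_pf p hp) m)
  have JpfS : (fun m => min (P m) (I pf m)) ∈ S := by
    refine ⟨fun m => ⟨(Jpos pf pf_nonneg m).le, min_le_left _ _⟩, fun m => ?_⟩
    exact Jmono pf _ pf_nonneg pf_le_J m
  have hfix : ∀ m, min (P m) (I pf m) = pf m :=
    fun m => le_antisymm (hle_pf _ JpfS m) (pf_le_J m)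
  have hfix' : (fun m => min (P m) (I pf m)) = pf := funext hfix
  have pf_pos : ∀ m, 0 < pf m := fun m => hfix m ▸ Jpos pf pf_nonneg m
  -- ===== degenerate case M = 0 =====
  rcases Nat.eq_zero_or_pos M with hM | hM
  · subst hM
    refine ⟨pf, pf_nonneg, hfix', fun p' _ _ => funext fun m => m.elim0, ?_⟩
    intro p₀ _
    have h : (fun t : ℕ => (fun p : Fin 0 → ℝ => fun m => min (P m) (I p m))^[t] p₀)
        = fun _ => pf := funext fun t => funext fun m => m.elim0
    rw [h]; exact tendsto_const_nhds
  haveI : NeZero M := ⟨hM.ne'⟩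
  have hFne : (Finset.univ : Finset (Fin M)).Nonempty := Finset.univ_nonempty
  have m₁ : Fin M := ⟨0, hM⟩
  -- ===== uniqueness =====
  have uniq_le : ∀ a b : Fin M → ℝ, (∀ m, 0 ≤ a m) → (∀ m, 0 ≤ b m) →
      (∀ m, min (P m) (I a m) = a m) → (∀ m, min (P m) (I b m) = b m) →
      ∀ m, a m ≤ b m := by
    intro a b ha hb hfa hfb
    have hbpos : ∀ m, 0 < b m := fun m => hfb m ▸ Jpos b hb m
    set μ := Finset.univ.sup' hFne (fun m => a m / b m) with hμdef
    have hle : ∀ m, a m ≤ μ * b m := by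
      intro m
      have h := Finset.le_sup' (fun m => a m / b m) (Finset.mem_univ m)
      rw [div_le_iff₀ (hbpos m)] at h
      linarith
    by_cases hμ1 : μ ≤ 1
    · intro m
      have h := le_trans (Finset.le_sup' (fun m => a m / b m) (Finset.mem_univ m)) hμ1
      exact (div_le_one (hbpos m)).mp h
    · exfalso
      push_neg at hμ1
      obtain ⟨m0, _, hm0⟩ := Finset.exists_mem_eq_sup' hFne (fun m => a m / b m)
      have heq0 : a m0 = μ * b m0 := by
        rw [hμdef, hm0, div_mul_cancel₀ _ (hbpos m0).ne']
      have hlt : a m0 < μ * b m0 := by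
        calc a m0 = min (P m0) (I a m0) := (hfa m0).symm
          _ ≤ min (P m0) (I (fun ℓ => μ * b ℓ) m0) :=
            Jmono a (fun ℓ => μ * b ℓ) ha hle m0
          _ < μ * min (P m0) (I b m0) := Jscale b hb μ hμ1 m0
          _ = μ * b m0 := by rw [hfb m0]
      linarith
  -- ===== convergence machinery =====
  set J : (Fin M → ℝ) → (Fin M → ℝ) := fun p => fun m => min (P m) (I p m) with hJdef
  have Jval : ∀ p m, J p m = min (P m) (I p m) := by intro p m; rw [hJdef]
  -- upper sequence from P
  set u : ℕ → (Fin M → ℝ) := fun n => J^[n] P with hu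
  have u_succ : ∀ n, u (n+1) = J (u n) := by
    intro n; rw [hu]; exact Function.iterate_succ_apply' J n P
  have u_ge_pf : ∀ n m, pf m ≤ u n m := by
    intro n
    induction n with
    | zero => intro m; exact pf_le_P m
    | succ n ih =>
      intro m
      rw [u_succ, Jval]
      calc pf m = min (P m) (I pf m) := (hfix m).symm
        _ ≤ min (P m) (I (u n) m) := Jmono pf (u n) pf_nonneg ih m
  have u_nonneg : ∀ n m, 0 ≤ u n m := fun n m => (pf_nonneg m).trans (u_ge_pf n m)
  have u_anti : ∀ n m, u (n+1) m ≤ u n m := by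
    intro n
    induction n with
    | zero =>
      intro m; rw [u_succ, Jval]
      have : u 0 = P := rfl
      rw [this]; exact min_le_left _ _
    | succ n ih =>
      intro m
      rw [u_succ (n+1), Jval]
      conv_rhs => rw [u_succ n, Jval]
      exact Jmono (u (n+1)) (u n) (u_nonneg (n+1)) ih m
  -- ratio sequence for u
  set μs : ℕ → ℝ := fun n => Finset.univ.sup' hFne (fun m => u n m / pf m) with hμs
  have μs_ge1 : ∀ n, 1 ≤ μs n := by
    intro n
    have h1 : (1:ℝ) ≤ u n m₁ / pf m₁ := (one_le_div (pf_pos m₁)).mpr (u_ge_pf n m₁)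
    exact h1.trans (Finset.le_sup' (fun m => u n m / pf m) (Finset.mem_univ m₁))
  have μs_bound : ∀ n m, u n m ≤ μs n * pf m := by
    intro n m
    have h := Finset.le_sup' (fun m => u n m / pf m) (Finset.mem_univ m)
    rw [div_le_iff₀ (pf_pos m)] at h
    linarith
  have μs_anti : ∀ n, μs (n+1) ≤ μs n := by
    intro n
    refine Finset.sup'_le _ _ (fun m _ => ?_)
    refine le_trans ?_ (Finset.le_sup' (fun m => u n m / pf m) (Finset.mem_univ m))
    gcongr
    · exact (pf_pos m).le
    · exact u_anti n m
  have μs_tendsto : Filter.Tendsto μs Filter.atTop (nhds 1) := by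
    refine aux_ratio_tendsto_one μs μs_ge1 μs_anti ?_
    intro hL
    set L := ⨅ n, μs n with hLd
    have hL0 : (0:ℝ) < L := lt_trans one_pos hL
    have hbdd : BddBelow (Set.range μs) := ⟨1, by rintro x ⟨n, rfl⟩; exact μs_ge1 n⟩
    have hLle : ∀ n, L ≤ μs n := fun n => ciInf_le hbdd n
    have hscaleL : ∀ m, min (P m) (I (fun ℓ => L * pf ℓ) m) < L * pf m := by
      intro m
      have h := Jscale pf pf_nonneg L hL m
      rwa [hfix m] at h
    set c := Finset.univ.sup' hFne (fun m => min (P m) (I (fun ℓ => L * pf ℓ) m) / pf m)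
      with hcd
    have hcL : c < L := by
      rw [hcd, Finset.sup'_lt_iff]
      intro m _
      rw [div_lt_iff₀ (pf_pos m)]
      exact hscaleL m
    have hcb : ∀ m, min (P m) (I (fun ℓ => L * pf ℓ) m) ≤ c * pf m := by
      intro m
      have h := Finset.le_sup'
        (fun m => min (P m) (I (fun ℓ => L * pf ℓ) m) / pf m) (Finset.mem_univ m)
      rw [div_le_iff₀ (pf_pos m)] at h
      rw [hcd]
      exact h
    have hc0 : 0 < c := by
      have h := Finset.le_sup'
        (fun m => min (P m) (I (fun ℓ => L * pf ℓ) m) / pf m) (Finset.mem_univ m₁)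
      have hq : 0 < min (P m₁) (I (fun ℓ => L * pf ℓ) m₁) / pf m₁ :=
        div_pos (Jpos _ (fun ℓ => mul_nonneg hL0.le (pf_nonneg ℓ)) m₁) (pf_pos m₁)
      rw [hcd]; exact lt_of_lt_of_le hq h
    refine ⟨c / L, (div_pos hc0 hL0).le, (div_lt_one hL0).mpr hcL, ?_⟩
    intro n
    refine Finset.sup'_le _ _ (fun m _ => ?_)
    rw [div_le_iff₀ (pf_pos m)]
    have step1 : u (n+1) m ≤ min (P m) (I (fun ℓ => μs n * pf ℓ) m) := by
      rw [u_succ, Jval]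
      exact Jmono (u n) (fun ℓ => μs n * pf ℓ) (u_nonneg n) (μs_bound n) m
    have step2 : min (P m) (I (fun ℓ => μs n * pf ℓ) m) ≤ c / L * μs n * pf m := by
      rcases eq_or_lt_of_le (hLle n) with hEq | hLt
      · have heq : (fun ℓ => μs n * pf ℓ) = (fun ℓ => L * pf ℓ) := by
          funext ℓ; rw [← hEq]
        rw [heq]
        calc min (P m) (I (fun ℓ => L * pf ℓ) m) ≤ c * pf m := hcb m
          _ = c / L * μs n * pf m := by rw [← hEq]; field_simp
      · have ht : (1:ℝ) < μs n / L := (one_lt_div hL0).mpr hLt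
        have heq : (fun ℓ => μs n * pf ℓ) = (fun ℓ => (μs n / L) * (L * pf ℓ)) := by
          funext ℓ; field_simp
        rw [heq]
        have h := Jscale (fun ℓ => L * pf ℓ)
          (fun ℓ => mul_nonneg hL0.le (pf_nonneg ℓ)) (μs n / L) ht m
        refine le_of_lt ?_
        calc min (P m) (I (fun ℓ => μs n / L * (L * pf ℓ)) m)
            < μs n / L * min (P m) (I (fun ℓ => L * pf ℓ) m) := h
          _ ≤ μs n / L * (c * pf m) :=
              mul_le_mul_of_nonneg_left (hcb m) (le_of_lt (lt_trans one_pos ht))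
          _ = c / L * μs n * pf m := by ring
    exact step1.trans step2
  have u_tendsto : ∀ m, Filter.Tendsto (fun n => u n m) Filter.atTop (nhds (pf m)) := by
    intro m
    have hup : Filter.Tendsto (fun n => μs n * pf m) Filter.atTop (nhds (pf m)) := by
      have := μs_tendsto.mul_const (pf m)
      rwa [one_mul] at this
    exact tendsto_of_tendsto_of_tendsto_of_le_of_le tendsto_const_nhds hup
      (fun n => u_ge_pf n m) (fun n => μs_bound n m)
  -- lower sequence from Î(0)
  set w : ℕ → (Fin M → ℝ) := fun n => J^[n] (J (fun _ => 0)) with hw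
  have w_succ : ∀ n, w (n+1) = J (w n) := by
    intro n; rw [hw]; exact Function.iterate_succ_apply' J n _
  have w_pos : ∀ n m, 0 < w n m := by
    intro n
    induction n with
    | zero =>
      intro m
      have : w 0 = J (fun _ => 0) := rfl
      rw [this, Jval]
      exact Jpos _ (fun _ => le_refl _) m
    | succ n ih =>
      intro m
      rw [w_succ, Jval]
      exact Jpos (w n) (fun k => (ih k).le) m
  have w_le_pf : ∀ n m, w n m ≤ pf m := by
    intro n
    induction n with
    | zero =>
      intro m
      have h0 : w 0 = J (fun _ => 0) := rfl
      rw [h0, Jval]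
      calc min (P m) (I (fun _ => 0) m)
          ≤ min (P m) (I pf m) := Jmono _ pf (fun _ => le_refl _) pf_nonneg m
        _ = pf m := hfix m
    | succ n ih =>
      intro m
      rw [w_succ, Jval]
      calc min (P m) (I (w n) m) ≤ min (P m) (I pf m) :=
          Jmono (w n) pf (fun k => (w_pos n k).le) ih m
        _ = pf m := hfix m
  have w_mono : ∀ n m, w n m ≤ w (n+1) m := by
    intro n
    induction n with
    | zero =>
      intro m
      rw [w_succ, Jval]
      have h0 : w 0 = J (fun _ => 0) := rfl
      conv_lhs => rw [h0, Jval]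
      exact Jmono (fun _ => 0) (w 0) (fun _ => le_refl _) (fun k => (w_pos 0 k).le) m
    | succ n ih =>
      intro m
      rw [w_succ (n+1), Jval]
      conv_lhs => rw [w_succ n, Jval]
      exact Jmono (w n) (w (n+1)) (fun k => (w_pos n k).le) ih m
  -- ratio sequence for w
  set νs : ℕ → ℝ := fun n => Finset.univ.sup' hFne (fun m => pf m / w n m) with hνs
  have νs_ge1 : ∀ n, 1 ≤ νs n := by
    intro n
    have h1 : (1:ℝ) ≤ pf m₁ / w n m₁ := (one_le_div (w_pos n m₁)).mpr (w_le_pf n m₁)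
    exact h1.trans (Finset.le_sup' (fun m => pf m / w n m) (Finset.mem_univ m₁))
  have νs_pos : ∀ n, 0 < νs n := fun n => lt_of_lt_of_le one_pos (νs_ge1 n)
  have νs_bound : ∀ n m, pf m ≤ νs n * w n m := by
    intro n m
    have h := Finset.le_sup' (fun m => pf m / w n m) (Finset.mem_univ m)
    rw [div_le_iff₀ (w_pos n m)] at h
    linarith
  have νs_bound' : ∀ n m, (1 / νs n) * pf m ≤ w n m := by
    intro n m
    rw [div_mul_eq_mul_div, div_le_iff₀ (νs_pos n), one_mul, mul_comm]
    exact νs_bound n m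
  have νs_anti : ∀ n, νs (n+1) ≤ νs n := by
    intro n
    refine Finset.sup'_le _ _ (fun m _ => ?_)
    refine le_trans ?_ (Finset.le_sup' (fun m => pf m / w n m) (Finset.mem_univ m))
    gcongr
    · exact (pf_nonneg m)
    · exact w_pos n m
    · exact w_mono n m
  have νs_tendsto : Filter.Tendsto νs Filter.atTop (nhds 1) := by
    refine aux_ratio_tendsto_one νs νs_ge1 νs_anti ?_
    intro hL
    set L := ⨅ n, νs n with hLd
    have hL0 : (0:ℝ) < L := lt_trans one_pos hL
    have hbdd : BddBelow (Set.range νs) := ⟨1, by rintro x ⟨n, rfl⟩; exact νs_ge1 n⟩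
    have hLle : ∀ n, L ≤ νs n := fun n => ciInf_le hbdd n
    have hlam0 : (0:ℝ) < 1 / L := by positivity
    have hlam1 : 1 / L < 1 := by rw [div_lt_one hL0]; exact hL
    have hsd : ∀ m, (1/L) * pf m < min (P m) (I (fun ℓ => (1/L) * pf ℓ) m) := by
      intro m
      have h := Jsdown pf pf_nonneg (1/L) hlam0 hlam1 m
      rwa [hfix m] at h
    set c := Finset.univ.inf' hFne (fun m => min (P m) (I (fun ℓ => (1/L) * pf ℓ) m) / pf m)
      with hcd
    have hcgt : 1 / L < c := by
      rw [hcd, Finset.lt_inf'_iff]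
      intro m _
      rw [lt_div_iff₀ (pf_pos m)]
      exact hsd m
    have hc0 : (0:ℝ) < c := lt_trans hlam0 hcgt
    have hcb : ∀ m, c * pf m ≤ min (P m) (I (fun ℓ => (1/L) * pf ℓ) m) := by
      intro m
      have h := Finset.inf'_le
        (fun m => min (P m) (I (fun ℓ => (1/L) * pf ℓ) m) / pf m) (Finset.mem_univ m)
      rw [le_div_iff₀ (pf_pos m)] at h
      rw [hcd]
      exact h
    have hLc : (1:ℝ) < L * c := by
      have := mul_lt_mul_of_pos_left hcgt hL0
      rwa [mul_one_div_cancel hL0.ne'] at this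
    refine ⟨1 / (L * c), by positivity, by rw [div_lt_one (lt_trans one_pos hLc)]; exact hLc, ?_⟩
    intro n
    refine Finset.sup'_le _ _ (fun m _ => ?_)
    -- show pf m / w (n+1) m ≤ (1/(L*c)) * νs n
    have key : (L * c / νs n) * pf m ≤ w (n+1) m := by
      have step1 : min (P m) (I (fun ℓ => (1 / νs n) * pf ℓ) m) ≤ w (n+1) m := by
        rw [w_succ, Jval]
        exact Jmono (fun ℓ => (1 / νs n) * pf ℓ) (w n)
          (fun ℓ => mul_nonneg (le_of_lt (div_pos one_pos (νs_pos n))) (pf_nonneg ℓ))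
          (νs_bound' n) m
      refine le_trans ?_ step1
      rcases eq_or_lt_of_le (hLle n) with hEq | hLt
      · have heq : (fun ℓ => (1 / νs n) * pf ℓ) = (fun ℓ => (1/L) * pf ℓ) := by
          funext ℓ; rw [← hEq]
        rw [heq, ← hEq]
        calc L * c / L * pf m = c * pf m := by field_simp
          _ ≤ min (P m) (I (fun ℓ => (1/L) * pf ℓ) m) := hcb m
      · have hs0 : (0:ℝ) < L / νs n := div_pos hL0 (νs_pos n)
        have hs1 : L / νs n < 1 := (div_lt_one (νs_pos n)).mpr hLt
        have heq : (fun ℓ => (1 / νs n) * pf ℓ) =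
            (fun ℓ => (L / νs n) * ((1/L) * pf ℓ)) := by
          funext ℓ
          rw [← mul_assoc]
          congr 1
          rw [div_mul_div_comm, mul_comm (νs n) L, mul_div_mul_left 1 (νs n) hL0.ne']
        rw [heq]
        have h := Jsdown (fun ℓ => (1/L) * pf ℓ)
          (fun ℓ => mul_nonneg hlam0.le (pf_nonneg ℓ)) (L / νs n) hs0 hs1 m
        calc L * c / νs n * pf m
            = (L / νs n) * (c * pf m) := by ring
          _ ≤ (L / νs n) * min (P m) (I (fun ℓ => (1/L) * pf ℓ) m) :=
              mul_le_mul_of_nonneg_left (hcb m) hs0.le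
          _ ≤ min (P m) (I (fun ℓ => L / νs n * ((1/L) * pf ℓ)) m) := h.le
    -- from key conclude the ratio bound
    have hwpos := w_pos (n+1) m
    rw [div_le_iff₀ hwpos]
    have hfrac : (0:ℝ) < L * c / νs n := div_pos (lt_trans one_pos hLc) (νs_pos n)
    calc pf m = (1 / (L * c) * νs n) * ((L * c / νs n) * pf m) := by
          have hne1 : (L * c) ≠ 0 := (lt_trans one_pos hLc).ne'
          have hne2 : νs n ≠ 0 := (νs_pos n).ne'
          field_simp
      _ ≤ (1 / (L * c) * νs n) * w (n+1) m := by
          have hcoef : (0:ℝ) ≤ 1 / (L * c) * νs n :=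
            mul_nonneg (by positivity) (νs_pos n).le
          exact mul_le_mul_of_nonneg_left key hcoef
  have w_tendsto : ∀ m, Filter.Tendsto (fun n => w n m) Filter.atTop (nhds (pf m)) := by
    intro m
    have hlow : Filter.Tendsto (fun n => (1 / νs n) * pf m) Filter.atTop (nhds (pf m)) := by
      have h1 : Filter.Tendsto (fun n => 1 / νs n) Filter.atTop (nhds 1) := by
        have := νs_tendsto.inv₀ one_ne_zero
        simpa [one_div] using this
      have := h1.mul_const (pf m)
      rwa [one_mul] at this
    exact tendsto_of_tendsto_of_tendsto_of_le_of_le hlow tendsto_const_nhds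
      (fun n => νs_bound' n m) (fun n => w_le_pf n m)
  -- lower sequence from 0 (shifted)
  set z : ℕ → (Fin M → ℝ) := fun n => J^[n] (fun _ => 0) with hz
  have z_shift : ∀ n, z (n+1) = w n := by
    intro n; rw [hz, hw]; exact Function.iterate_succ_apply J n _
  have z_tendsto : ∀ m, Filter.Tendsto (fun n => z n m) Filter.atTop (nhds (pf m)) := by
    intro m
    have h1 : Filter.Tendsto (fun n => z (n + 1) m) Filter.atTop (nhds (pf m)) := by
      have heq : (fun n => z (n + 1) m) = fun n => w n m := funext fun n => by rw [z_shift n]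
      rw [heq]
      exact w_tendsto m
    exact (Filter.tendsto_add_atTop_iff_nat 1).mp h1
  -- ===== assemble =====
  refine ⟨pf, pf_nonneg, hfix', ?_, ?_⟩
  · intro p' hp' hfp'
    have hfp'' : ∀ m, min (P m) (I p' m) = p' m := fun m => congrFun hfp' m
    funext m
    exact le_antisymm (uniq_le p' pf hp' pf_nonneg hfp'' hfix m)
      (uniq_le pf p' pf_nonneg hp' hfix hfp'' m)
  · intro p₀ hp₀
    have hgoal : ∀ m, Filter.Tendsto (fun t : ℕ => J^[t] p₀ m) Filter.atTop (nhds (pf m)) := by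
      intro m
      have hsand : ∀ n, (∀ k, 0 ≤ z n k) ∧ (∀ k, z n k ≤ J^[n] p₀ k) ∧
          (∀ k, J^[n] p₀ k ≤ u n k) := by
        intro n
        induction n with
        | zero =>
          refine ⟨fun k => le_refl _, fun k => (hp₀ k).1, fun k => (hp₀ k).2⟩
        | succ n ih =>
          obtain ⟨hz0, hzy, hyu⟩ := ih
          have z_succ : z (n+1) = J (z n) := Function.iterate_succ_apply' J n _
          have y_succ : J^[n+1] p₀ = J (J^[n] p₀) := Function.iterate_succ_apply' J n _
          refine ⟨?_, ?_, ?_⟩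
          · intro k
            rw [z_succ, Jval]
            exact (Jpos (z n) hz0 k).le
          · intro k
            rw [z_succ, y_succ, Jval, Jval]
            exact Jmono (z n) (J^[n] p₀) hz0 hzy k
          · intro k
            rw [y_succ, u_succ, Jval, Jval]
            exact Jmono (J^[n] p₀) (u n) (fun j => (hz0 j).trans (hzy j)) hyu k
      exact tendsto_of_tendsto_of_tendsto_of_le_of_le (z_tendsto m) (u_tendsto m)
        (fun n => (hsand n).2.1 m) (fun n => (hsand n).2.2 m)
    exact tendsto_pi_nhds.mpr hgoal
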